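/- Let k ≥ 1, n = 2k, fix positive integers m_1,…,m_n and let Γ = {r ∈ ℤⁿ : m_i divides r_i for all i}. Let W be a nonzero finite-dimensional module over the symplectic Lie algebra 𝔰𝔭_{2k}(ℂ) that is irreducible (the only subspaces of W invariant under the action of every matrix in 𝔰𝔭_{2k}(ℂ) are 0 and W), and fix α, β ∈ ℂⁿ. On L(W) = W ⊗ ℂ[Γ] define linear operators: for 0 ≠ r ∈ Γ, π(r)(w ⊗ t^k) = ⟨r̄, k + β⟩ w ⊗ t^{k+r} + ((r·r̄ᵀ)·w) ⊗ t^{k+r}; for u ∈ ℂⁿ, δ(u)(w ⊗ t^k) = ⟨u, α + k⟩ w ⊗ t^k; and for r ∈ Γ, μ(r)(w ⊗ t^k) = w ⊗ t^{k+r}. Then the only subspaces of L(W) invariant under all of the operators π(r), δ(u), μ(r) are 0 and L(W). -/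

import Mathlib

noncomputable section

open scoped BigOperators Matrix

attribute [local instance 100] LieRing.ofAssociativeRing

/-- For `r ∈ ℂ^{2k}` (indexed by `Fin k ⊕ Fin k`), `bar r = r̄ = (r_{k+1},…,r_{2k},−r_1,…,−r_k)`. -/
def bar {k : ℕ} (r : Fin k ⊕ Fin k → ℂ) : Fin k ⊕ Fin k → ℂ :=
  Sum.elim (fun i => r (Sum.inr i)) (fun i => - r (Sum.inl i))

/-- The standard symmetric bilinear form `⟨u, v⟩ = ∑ i, u i * v i` on `ℂ^{2k}`. -/
def pair {k : ℕ} (u v : Fin k ⊕ Fin k → ℂ) : ℂ := ∑ i, u i * v i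

/-- The coercion `ℤ^{2k} ⊆ ℂ^{2k}`. -/
def zc {k : ℕ} (r : Fin k ⊕ Fin k → ℤ) : Fin k ⊕ Fin k → ℂ := fun i => (r i : ℂ)

/-- The standard symplectic structure matrix `J = [[0, I_k],[−I_k, 0]]`. -/
def Jmat (k : ℕ) : Matrix (Fin k ⊕ Fin k) (Fin k ⊕ Fin k) ℂ :=
  Matrix.fromBlocks 0 1 (-1) 0

/-- The symplectic Lie algebra `𝔰𝔭_{2k}(ℂ) = {A : Aᵀ J + J A = 0}`. -/
def sp (k : ℕ) : LieSubalgebra ℂ (Matrix (Fin k ⊕ Fin k) (Fin k ⊕ Fin k) ℂ) :=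
  skewAdjointMatricesLieSubalgebra (Jmat k)

/-- The outer product `r·r̄ᵀ` lies in `𝔰𝔭_{2k}(ℂ)`. -/
lemma outer_mem_sp (k : ℕ) (r : Fin k ⊕ Fin k → ℂ) :
    Matrix.vecMulVec r (bar r) ∈ sp k := by
  rw [sp, mem_skewAdjointMatricesLieSubalgebra, mem_skewAdjointMatricesSubmodule]
  show _ᵀ * Jmat k = Jmat k * _
  ext i j
  simp only [Matrix.mul_apply, Matrix.transpose_apply, Matrix.vecMulVec_apply, Jmat,
    Matrix.fromBlocks, Fintype.sum_sum_type, Matrix.neg_apply, Matrix.one_apply,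
    Matrix.zero_apply, Matrix.of_apply, bar]
  cases i <;> cases j <;>
    simp [Sum.elim, Matrix.one_apply, Finset.sum_ite_eq, Finset.sum_ite_eq', mul_comm]

/-- The lattice `Γ = {r ∈ ℤⁿ : m_i ∣ r_i for all i}`. -/
def Gamma (k : ℕ) (m : Fin k ⊕ Fin k → ℕ) : AddSubgroup (Fin k ⊕ Fin k → ℤ) where
  carrier := {r | ∀ i, (m i : ℤ) ∣ r i}
  add_mem' := by
    intro a b ha hb i
    simpa using dvd_add (ha i) (hb i)
  zero_mem' := by
    intro i
    simp
  neg_mem' := by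
    intro a ha i
    simpa using (ha i).neg_right

/-- `π(r)`: on `L(W) = W ⊗ ℂ[Γ]` (realized as `Γ →₀ W`),
`π(r)(w ⊗ t^p) = ⟨r̄, p + β⟩ w ⊗ t^{p+r} + ((r·r̄ᵀ)·w) ⊗ t^{p+r}`. -/
def piOp {k : ℕ} {m : Fin k ⊕ Fin k → ℕ} {W : Type*} [AddCommGroup W] [Module ℂ W]
    (act : sp k →ₗ⁅ℂ⁆ Module.End ℂ W) (β : Fin k ⊕ Fin k → ℂ) (r : Gamma k m) :
    (Gamma k m →₀ W) →ₗ[ℂ] (Gamma k m →₀ W) :=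
  Finsupp.lsum ℂ fun p : Gamma k m =>
    Finsupp.lsingle (p + r) ∘ₗ
      ((pair (bar (zc (r : Fin k ⊕ Fin k → ℤ))) (zc (p : Fin k ⊕ Fin k → ℤ) + β)) •
          (LinearMap.id : W →ₗ[ℂ] W)
        + (act ⟨Matrix.vecMulVec (zc (r : Fin k ⊕ Fin k → ℤ)) (bar (zc (r : Fin k ⊕ Fin k → ℤ))),
            outer_mem_sp k _⟩ : W →ₗ[ℂ] W))

/-- `δ(u)`: `δ(u)(w ⊗ t^p) = ⟨u, α + p⟩ w ⊗ t^p`. -/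
def deltaOp {k : ℕ} {m : Fin k ⊕ Fin k → ℕ} (W : Type*) [AddCommGroup W] [Module ℂ W]
    (α : Fin k ⊕ Fin k → ℂ) (u : Fin k ⊕ Fin k → ℂ) :
    (Gamma k m →₀ W) →ₗ[ℂ] (Gamma k m →₀ W) :=
  Finsupp.lsum ℂ fun p : Gamma k m =>
    (pair u (α + zc (p : Fin k ⊕ Fin k → ℤ))) • Finsupp.lsingle p

/-- `μ(r)`: `μ(r)(w ⊗ t^p) = w ⊗ t^{p+r}`. -/
def muOp {k : ℕ} {m : Fin k ⊕ Fin k → ℕ} (W : Type*) [AddCommGroup W] [Module ℂ W]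
    (r : Gamma k m) : (Gamma k m →₀ W) →ₗ[ℂ] (Gamma k m →₀ W) :=
  Finsupp.lsum ℂ fun p : Gamma k m => (Finsupp.lsingle (p + r) : W →ₗ[ℂ] Gamma k m →₀ W)

lemma J_transpose (k : ℕ) : (Jmat k)ᵀ = -Jmat k := by
  ext a b
  cases a <;> cases b <;>
    simp [Jmat, Matrix.fromBlocks, Matrix.one_apply, eq_comm]

lemma J_mul_J (k : ℕ) : Jmat k * Jmat k = -1 := by
  ext a b
  cases a <;> cases b <;>
    simp [Jmat, Matrix.fromBlocks, Matrix.mul_apply, Fintype.sum_sum_type,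
      Matrix.one_apply, Finset.sum_ite_eq, Finset.sum_ite_eq']

lemma J_mul_Jt (k : ℕ) : Jmat k * (Jmat k)ᵀ = 1 := by
  rw [J_transpose, Matrix.mul_neg, J_mul_J, neg_neg]

lemma bar_single (k : ℕ) (j b : Fin k ⊕ Fin k) :
    bar (Pi.single j (1:ℂ)) b = Jmat k b j := by
  cases b <;> cases j <;>
    simp [bar, Jmat, Matrix.fromBlocks, Pi.single_apply, Matrix.one_apply, eq_comm]

lemma bar_smul {k : ℕ} (c : ℂ) (v : Fin k ⊕ Fin k → ℂ) : bar (c • v) = c • bar v := by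
  funext b; cases b <;> simp [bar, mul_comm]

lemma vecMulVec_smul_left {k : ℕ} (c : ℂ) (v w : Fin k ⊕ Fin k → ℂ) :
    Matrix.vecMulVec (c • v) w = c • Matrix.vecMulVec v w := by
  ext a b; simp [Matrix.vecMulVec_apply, smul_eq_mul]; ring

lemma vecMulVec_smul_right {k : ℕ} (c : ℂ) (v w : Fin k ⊕ Fin k → ℂ) :
    Matrix.vecMulVec v (c • w) = c • Matrix.vecMulVec v w := by
  ext a b; simp [Matrix.vecMulVec_apply, smul_eq_mul]; ring

lemma sum_outer (k : ℕ) (S : Matrix (Fin k ⊕ Fin k) (Fin k ⊕ Fin k) ℂ) :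
    ∑ i, ∑ j, S i j • (Matrix.vecMulVec (Pi.single i 1) (bar (Pi.single j 1)) +
        Matrix.vecMulVec (Pi.single j 1) (bar (Pi.single i 1)))
      = S * (Jmat k)ᵀ + Sᵀ * (Jmat k)ᵀ := by
  ext a b
  simp only [Matrix.sum_apply, Matrix.smul_apply, Matrix.add_apply, Matrix.mul_apply,
    Matrix.vecMulVec_apply, bar_single, Pi.single_apply, Matrix.transpose_apply,
    smul_eq_mul, mul_add, Finset.sum_add_distrib, ite_mul, one_mul, zero_mul,
    mul_ite, mul_zero, mul_one]
  rw [Finset.sum_comm (γ := Fin k ⊕ Fin k)]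
  simp [Finset.sum_ite_eq, Finset.sum_ite_eq', mul_comm]

lemma span_ge (k : ℕ) (m : Fin k ⊕ Fin k → ℕ) (hm : ∀ i, 0 < m i) :
    ∀ A ∈ sp k, A ∈ Submodule.span ℂ
      {B | ∃ r : Gamma k m, r ≠ 0 ∧
        B = Matrix.vecMulVec (zc (r : Fin k ⊕ Fin k → ℤ)) (bar (zc (r : Fin k ⊕ Fin k → ℤ)))} := by
  intro A hA
  set T := Submodule.span ℂ {B | ∃ r : Gamma k m, r ≠ 0 ∧
      B = Matrix.vecMulVec (zc (r : Fin k ⊕ Fin k → ℤ)) (bar (zc (r : Fin k ⊕ Fin k → ℤ)))} with hT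
  have hMmem : ∀ r : Gamma k m,
      Matrix.vecMulVec (zc (r : Fin k ⊕ Fin k → ℤ)) (bar (zc (r : Fin k ⊕ Fin k → ℤ))) ∈ T := by
    intro r
    rcases eq_or_ne r 0 with h | h
    · subst h
      have h0 : zc ((0 : Gamma k m) : Fin k ⊕ Fin k → ℤ) = 0 := by funext i; simp [zc]
      rw [h0]
      have : Matrix.vecMulVec (0 : Fin k ⊕ Fin k → ℂ) (bar (0 : Fin k ⊕ Fin k → ℂ))
          = (0 : Matrix (Fin k ⊕ Fin k) (Fin k ⊕ Fin k) ℂ) := by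
        ext a b; simp [Matrix.vecMulVec_apply]
      rw [this]; exact Submodule.zero_mem T
    · exact Submodule.subset_span ⟨r, h, rfl⟩
  have hBmem : ∀ r s : Gamma k m,
      Matrix.vecMulVec (zc (r : Fin k ⊕ Fin k → ℤ)) (bar (zc (s : Fin k ⊕ Fin k → ℤ))) +
        Matrix.vecMulVec (zc (s : Fin k ⊕ Fin k → ℤ)) (bar (zc (r : Fin k ⊕ Fin k → ℤ))) ∈ T := by
    intro r s
    have key : Matrix.vecMulVec (zc (r : Fin k ⊕ Fin k → ℤ)) (bar (zc (s : Fin k ⊕ Fin k → ℤ))) +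
        Matrix.vecMulVec (zc (s : Fin k ⊕ Fin k → ℤ)) (bar (zc (r : Fin k ⊕ Fin k → ℤ)))
        = Matrix.vecMulVec (zc ((r+s : Gamma k m) : Fin k ⊕ Fin k → ℤ))
            (bar (zc ((r+s : Gamma k m) : Fin k ⊕ Fin k → ℤ)))
          - Matrix.vecMulVec (zc (r : Fin k ⊕ Fin k → ℤ)) (bar (zc (r : Fin k ⊕ Fin k → ℤ)))
          - Matrix.vecMulVec (zc (s : Fin k ⊕ Fin k → ℤ)) (bar (zc (s : Fin k ⊕ Fin k → ℤ))) := by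
      have hco : ((r + s : Gamma k m) : Fin k ⊕ Fin k → ℤ) = (r : Fin k ⊕ Fin k → ℤ) + s := rfl
      ext a b
      cases b <;>
        simp [Matrix.vecMulVec_apply, bar, zc, hco] <;> push_cast <;> ring
    rw [key]
    exact Submodule.sub_mem _ (Submodule.sub_mem _ (hMmem _) (hMmem _)) (hMmem _)
  have hCmem : ∀ i j : Fin k ⊕ Fin k,
      Matrix.vecMulVec (Pi.single i (1:ℂ)) (bar (Pi.single j 1)) +
        Matrix.vecMulVec (Pi.single j 1) (bar (Pi.single i 1)) ∈ T := by
    intro i j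
    have hmem : ∀ i : Fin k ⊕ Fin k, (Pi.single i (m i : ℤ) : Fin k ⊕ Fin k → ℤ) ∈ Gamma k m := by
      intro i l
      rcases eq_or_ne l i with rfl | h
      · simp
      · simp [Pi.single_apply, h]
    have h1 : ∀ i : Fin k ⊕ Fin k,
        zc ((⟨Pi.single i (m i : ℤ), hmem i⟩ : Gamma k m) : Fin k ⊕ Fin k → ℤ)
          = (m i : ℂ) • (Pi.single i 1 : Fin k ⊕ Fin k → ℂ) := by
      intro i; funext l
      rcases eq_or_ne l i with rfl | h
      · simp [zc]
      · simp [zc, Pi.single_apply, h]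
    have hne : ∀ i : Fin k ⊕ Fin k, (⟨Pi.single i (m i : ℤ), hmem i⟩ : Gamma k m) ≠ 0 := by
      intro i hcon
      have := congrFun (congrArg (Subtype.val) hcon) i
      have h2 : (Pi.single i (m i : ℤ) : Fin k ⊕ Fin k → ℤ) i = 0 := this
      rw [Pi.single_eq_same] at h2
      exact (hm i).ne' (by exact_mod_cast h2)
    have hB := hBmem ⟨Pi.single i (m i : ℤ), hmem i⟩ ⟨Pi.single j (m j : ℤ), hmem j⟩
    rw [h1, h1, bar_smul, bar_smul, vecMulVec_smul_left, vecMulVec_smul_left,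
      vecMulVec_smul_right, vecMulVec_smul_right, smul_smul, smul_smul] at hB
    have hBeq : ((m i : ℂ) * (m j : ℂ)) •
        (Matrix.vecMulVec (Pi.single i (1:ℂ)) (bar (Pi.single j 1)) +
          Matrix.vecMulVec (Pi.single j 1) (bar (Pi.single i 1)))
        = ((m i : ℂ) * (m j : ℂ)) • Matrix.vecMulVec (Pi.single i (1:ℂ)) (bar (Pi.single j 1))
          + ((m j : ℂ) * (m i : ℂ)) • Matrix.vecMulVec (Pi.single j 1) (bar (Pi.single i 1)) := by
      rw [smul_add, mul_comm (m j : ℂ)]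
    rw [← hBeq] at hB
    have hmne : ((m i : ℂ) * (m j : ℂ)) ≠ 0 := by
      have h1 : (m i : ℂ) ≠ 0 := Nat.cast_ne_zero.mpr (hm i).ne'
      have h2 : (m j : ℂ) ≠ 0 := Nat.cast_ne_zero.mpr (hm j).ne'
      exact mul_ne_zero h1 h2
    exact (Submodule.smul_mem_iff T hmne).mp hB
  -- now the main identity
  have hA' : Aᵀ * Jmat k = Jmat k * (-A) := by
    rw [sp, mem_skewAdjointMatricesLieSubalgebra, mem_skewAdjointMatricesSubmodule] at hA
    exact hA
  have hAt : Aᵀ = Jmat k * A * Jmat k := by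
    have h2 := congrArg (· * (Jmat k)ᵀ) hA'
    simp only [Matrix.mul_assoc, J_mul_Jt, Matrix.mul_one] at h2
    rw [h2, J_transpose]
    simp [Matrix.mul_neg, Matrix.neg_mul, Matrix.mul_assoc]
  set S := A * Jmat k with hS
  have hS_symm : Sᵀ = S := by
    rw [hS, Matrix.transpose_mul, J_transpose, hAt]
    rw [Matrix.neg_mul, ← Matrix.mul_assoc, ← Matrix.mul_assoc, J_mul_J]
    simp [Matrix.mul_assoc]
  have hSJ : S * (Jmat k)ᵀ = A := by
    rw [hS, Matrix.mul_assoc, J_mul_Jt, Matrix.mul_one]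
  have hkey := sum_outer k S
  rw [hS_symm, hSJ] at hkey
  have hAeq : A = (2:ℂ)⁻¹ • ∑ i, ∑ j, S i j •
      (Matrix.vecMulVec (Pi.single i 1) (bar (Pi.single j 1)) +
        Matrix.vecMulVec (Pi.single j 1) (bar (Pi.single i 1))) := by
    rw [hkey, ← two_smul ℂ A, smul_smul]
    norm_num
  rw [hAeq]
  exact Submodule.smul_mem _ _ (Submodule.sum_mem _ fun i _ =>
    Submodule.sum_mem _ fun j _ => Submodule.smul_mem _ _ (hCmem i j))

section Eval
variable {k : ℕ} {m : Fin k ⊕ Fin k → ℕ} {W : Type*} [AddCommGroup W] [Module ℂ W]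

lemma muOp_single (r p : Gamma k m) (w : W) :
    muOp W r (Finsupp.single p w) = Finsupp.single (p + r) w := by
  simp [muOp, Finsupp.lsum_single]

lemma deltaOp_single (α u : Fin k ⊕ Fin k → ℂ) (p : Gamma k m) (w : W) :
    deltaOp W α u (Finsupp.single p w)
      = pair u (α + zc (p : Fin k ⊕ Fin k → ℤ)) • Finsupp.single p w := by
  simp [deltaOp, Finsupp.lsum_single]

lemma piOp_single (act : sp k →ₗ⁅ℂ⁆ Module.End ℂ W) (β : Fin k ⊕ Fin k → ℂ)
    (r p : Gamma k m) (w : W) :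
    piOp act β r (Finsupp.single p w)
      = Finsupp.single (p + r)
          ((pair (bar (zc (r : Fin k ⊕ Fin k → ℤ))) (zc (p : Fin k ⊕ Fin k → ℤ) + β)) • w
            + act ⟨Matrix.vecMulVec (zc (r : Fin k ⊕ Fin k → ℤ))
                (bar (zc (r : Fin k ⊕ Fin k → ℤ))), outer_mem_sp k _⟩ w) := by
  simp [piOp, Finsupp.lsum_single]

lemma deltaOp_apply (α u : Fin k ⊕ Fin k → ℂ) (f : Gamma k m →₀ W) (q : Gamma k m) :
    (deltaOp W α u f) q = pair u (α + zc (q : Fin k ⊕ Fin k → ℤ)) • f q := by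
  induction f using Finsupp.induction_linear with
  | zero => simp
  | add f g hf hg => simp [map_add, hf, hg, smul_add]
  | single p w =>
    rw [deltaOp_single]
    rcases eq_or_ne q p with rfl | h
    · simp
    · simp [Finsupp.single_apply, Ne.symm h, h]
end Eval


/-- if `W` is a nonzero finite dimensional irreducible module over
`𝔰𝔭_{2k}(ℂ)`, then for any `α, β ∈ ℂⁿ` the only subspaces of `L(W) = W ⊗ ℂ[Γ]` invariant
under all the operators `π(r)` (`0 ≠ r ∈ Γ`), `δ(u)` (`u ∈ ℂⁿ`), `μ(r)` (`r ∈ Γ`) are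
`0` and `L(W)`. -/
theorem stmt10 (k : ℕ) (hk : 1 ≤ k) (m : Fin k ⊕ Fin k → ℕ) (hm : ∀ i, 0 < m i)
    (W : Type*) [AddCommGroup W] [Module ℂ W] [FiniteDimensional ℂ W] [Nontrivial W]
    (act : sp k →ₗ⁅ℂ⁆ Module.End ℂ W)
    (hirr : ∀ U : Submodule ℂ W, (∀ A : sp k, ∀ w ∈ U, act A w ∈ U) → U = ⊥ ∨ U = ⊤)
    (α β : Fin k ⊕ Fin k → ℂ) :
    ∀ U : Submodule ℂ (Gamma k m →₀ W),
      (∀ r : Gamma k m, r ≠ 0 → ∀ f ∈ U, piOp act β r f ∈ U) →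
      (∀ u : Fin k ⊕ Fin k → ℂ, ∀ f ∈ U, deltaOp W α u f ∈ U) →
      (∀ r : Gamma k m, ∀ f ∈ U, muOp W r f ∈ U) →
      U = ⊥ ∨ U = ⊤ := by
  intro U hπ hδ hμ
  have hshift : ∀ (p q : Gamma k m) (w : W),
      Finsupp.single p w ∈ U → Finsupp.single q w ∈ U := by
    intro p q w h
    have h2 := hμ (q - p) _ h
    rw [muOp_single] at h2
    have h3 : p + (q - p) = q := by abel
    rwa [h3] at h2
  have hgrade : ∀ f ∈ U, ∀ p : Gamma k m, Finsupp.single p (f p) ∈ U := by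
    suffices H : ∀ n : ℕ, ∀ f ∈ U, f.support.card ≤ n →
        ∀ p : Gamma k m, Finsupp.single p (f p) ∈ U by
      intro f hf p; exact H f.support.card f hf le_rfl p
    intro n
    induction n with
    | zero =>
      intro f hf hc p
      have h0 : f = 0 := Finsupp.support_eq_empty.mp (Finset.card_eq_zero.mp (Nat.le_zero.mp hc))
      subst h0
      simpa using Submodule.zero_mem U
    | succ n ih =>
      intro f hf hc p
      by_cases hex : ∃ q ∈ f.support, q ≠ p
      · obtain ⟨q, hq, hqp⟩ := hex
        have hne : (q : Fin k ⊕ Fin k → ℤ) ≠ (p : Fin k ⊕ Fin k → ℤ) := by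
          intro h; exact hqp (Subtype.ext h)
        obtain ⟨i, hi⟩ := Function.ne_iff.mp hne
        set u : Fin k ⊕ Fin k → ℂ := Pi.single i 1 with hu
        have hpair : ∀ x : Gamma k m, pair u (α + zc (x : Fin k ⊕ Fin k → ℤ))
            = α i + ((x : Fin k ⊕ Fin k → ℤ) i : ℂ) := by
          intro x
          rw [pair, Finset.sum_eq_single i]
          · simp [hu, zc]
          · intro b _ hb; simp [hu, Pi.single_apply, hb]
          · intro hmem; exact absurd (Finset.mem_univ i) hmem
        set cq := pair u (α + zc (q : Fin k ⊕ Fin k → ℤ)) with hcq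
        set g := deltaOp W α u f - cq • f with hg
        have hgU : g ∈ U := Submodule.sub_mem U (hδ u f hf) (Submodule.smul_mem U cq hf)
        have hgap : ∀ x : Gamma k m,
            g x = (pair u (α + zc (x : Fin k ⊕ Fin k → ℤ)) - cq) • f x := by
          intro x; simp [hg, deltaOp_apply, sub_smul]
        have hsupp : g.support ⊆ f.support.erase q := by
          intro x hx
          rw [Finsupp.mem_support_iff] at hx
          rw [Finset.mem_erase, Finsupp.mem_support_iff]
          refine ⟨?_, ?_⟩
          · rintro rfl; exact hx (by simp [hgap, hcq])
          · intro hfx; exact hx (by simp [hgap, hfx])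
        have hcard : g.support.card ≤ n := by
          calc g.support.card ≤ (f.support.erase q).card := Finset.card_le_card hsupp
            _ = f.support.card - 1 := Finset.card_erase_of_mem hq
            _ ≤ n := by omega
        have hdist : pair u (α + zc (p : Fin k ⊕ Fin k → ℤ)) - cq ≠ 0 := by
          rw [hcq, hpair, hpair]
          intro hcon
          apply hi
          have h5 : ((q : Fin k ⊕ Fin k → ℤ) i : ℂ) = ((p : Fin k ⊕ Fin k → ℤ) i : ℂ) := by
            linear_combination -hcon
          exact_mod_cast h5
        have hsp := ih g hgU hcard p
        rw [hgap p, ← Finsupp.smul_single] at hsp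
        have h6 := Submodule.smul_mem U (pair u (α + zc (p : Fin k ⊕ Fin k → ℤ)) - cq)⁻¹ hsp
        rwa [inv_smul_smul₀ hdist] at h6
      · push_neg at hex
        have hss : f.support ⊆ {p} := fun x hx => Finset.mem_singleton.mpr (hex x hx)
        rw [← Finsupp.support_subset_singleton.mp hss]
        exact hf
  set V : Submodule ℂ W := U.comap (Finsupp.lsingle (0 : Gamma k m)) with hV
  have hVmem : ∀ w : W, w ∈ V ↔ Finsupp.single (0 : Gamma k m) w ∈ U := by
    intro w
    rw [hV, Submodule.mem_comap, Finsupp.lsingle_apply]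
  have hVgen : ∀ r : Gamma k m, r ≠ 0 → ∀ w ∈ V,
      act ⟨Matrix.vecMulVec (zc (r : Fin k ⊕ Fin k → ℤ)) (bar (zc (r : Fin k ⊕ Fin k → ℤ))),
        outer_mem_sp k _⟩ w ∈ V := by
    intro r hr w hw
    have h1 := hπ r hr _ ((hVmem w).mp hw)
    rw [piOp_single, zero_add] at h1
    have h2 := hshift r 0 _ h1
    rw [Finsupp.single_add] at h2
    have h3 : Finsupp.single (0 : Gamma k m)
        ((pair (bar (zc (r : Fin k ⊕ Fin k → ℤ)))
          (zc ((0 : Gamma k m) : Fin k ⊕ Fin k → ℤ) + β)) • w) ∈ U := by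
      rw [← Finsupp.smul_single]
      exact Submodule.smul_mem U _ ((hVmem w).mp hw)
    have h4 := Submodule.sub_mem U h2 h3
    rw [add_sub_cancel_left] at h4
    exact (hVmem _).mpr h4
  have hVinv : ∀ A : sp k, ∀ w ∈ V, act A w ∈ V := by
    have main : ∀ B ∈ Submodule.span ℂ {B | ∃ r : Gamma k m, r ≠ 0 ∧
        B = Matrix.vecMulVec (zc (r : Fin k ⊕ Fin k → ℤ)) (bar (zc (r : Fin k ⊕ Fin k → ℤ)))},
        ∃ hB : B ∈ sp k, ∀ w ∈ V, act ⟨B, hB⟩ w ∈ V := by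
      intro B hBspan
      induction hBspan using Submodule.span_induction with
      | mem x hx =>
        obtain ⟨r, hr, rfl⟩ := hx
        exact ⟨outer_mem_sp k _, hVgen r hr⟩
      | zero =>
        refine ⟨(sp k).zero_mem', ?_⟩
        intro w hw
        have hz : (⟨(0 : Matrix (Fin k ⊕ Fin k) (Fin k ⊕ Fin k) ℂ), (sp k).zero_mem'⟩ : sp k)
            = 0 := rfl
        rw [hz, map_zero]
        simpa using Submodule.zero_mem V
      | add x y hx hy ihx ihy =>
        obtain ⟨h1, p1⟩ := ihx
        obtain ⟨h2, p2⟩ := ihy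
        refine ⟨add_mem h1 h2, ?_⟩
        intro w hw
        have hxy : (⟨x + y, add_mem h1 h2⟩ : sp k) = ⟨x, h1⟩ + ⟨y, h2⟩ := rfl
        rw [hxy, map_add]
        exact Submodule.add_mem V (p1 w hw) (p2 w hw)
      | smul a x hx ihx =>
        obtain ⟨h1, p1⟩ := ihx
        refine ⟨Submodule.smul_mem _ a h1, ?_⟩
        intro w hw
        have hax : (⟨a • x, Submodule.smul_mem _ a h1⟩ : sp k) = a • (⟨x, h1⟩ : sp k) := rfl
        rw [hax, map_smul]
        exact Submodule.smul_mem V a (p1 w hw)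
    intro A w hw
    obtain ⟨hB, hP⟩ := main (A : Matrix (Fin k ⊕ Fin k) (Fin k ⊕ Fin k) ℂ)
      (span_ge k m hm _ A.2)
    have hAeq : (⟨(A : Matrix (Fin k ⊕ Fin k) (Fin k ⊕ Fin k) ℂ), hB⟩ : sp k) = A :=
      Subtype.ext rfl
    exact hAeq ▸ hP w hw
  rcases hirr V hVinv with hbot | htop
  · left
    rw [Submodule.eq_bot_iff]
    intro f hf
    ext x
    have h1 := hgrade f hf x
    have h2 := hshift x 0 _ h1
    have h3 : f x ∈ V := (hVmem _).mpr h2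
    rw [hbot] at h3
    simpa using h3
  · right
    rw [Submodule.eq_top_iff']
    intro f
    rw [← Finsupp.sum_single f, Finsupp.sum]
    refine Submodule.sum_mem U fun x _ => ?_
    have h1 : f x ∈ V := htop ▸ Submodule.mem_top
    exact hshift 0 x _ ((hVmem _).mp h1)
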